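/- Let j ∈ ℕ, N = 2j+1, and t : M³ → ℂ, with φ its discrete Fourier presentation. Then Σ_{a,b,c=0}^{N−1} φ_{abc}² = N³·Σ_{(m₁,m₂,m₃)∈M³} (−1)^{3j−|m₁|−|m₂|−|m₃|}·t(m₁,m₂,m₃)·t(−m₁,−m₂,−m₃). -/

import Mathlib

open Finset

/-- The discrete Fourier presentation of `t : M³ → ℂ`, where `M = {-j, …, j}`:
`φ_{abc} = Σ_{m∈M³} t(m₁,m₂,m₃) i^{3j-|m₁|-|m₂|-|m₃|} exp(-(2πi/N)(a m₁ + b m₂ + c m₃))`. -/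
noncomputable def fourierPresentation (j N : ℕ) (t : ℤ → ℤ → ℤ → ℂ) :
    ℤ → ℤ → ℤ → ℂ :=
  fun a b c =>
    ∑ m1 ∈ Finset.Icc (-(j : ℤ)) (j : ℤ), ∑ m2 ∈ Finset.Icc (-(j : ℤ)) (j : ℤ),
      ∑ m3 ∈ Finset.Icc (-(j : ℤ)) (j : ℤ),
        t m1 m2 m3 * Complex.I ^ (3 * (j : ℤ) - |m1| - |m2| - |m3|) *
          Complex.exp (-(2 * (Real.pi : ℂ) * Complex.I / (N : ℂ)) *
            ((a : ℂ) * (m1 : ℂ) + (b : ℂ) * (m2 : ℂ) + (c : ℂ) * (m3 : ℂ)))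

/-- auxiliary exponential character -/
noncomputable def eChar (N : ℕ) (a : ℕ) (m : ℤ) : ℂ :=
  Complex.exp (-(2 * (Real.pi : ℂ) * Complex.I / (N : ℂ)) * ((a : ℂ) * (m : ℂ)))

/-- auxiliary coefficient -/
noncomputable def Faux (j : ℕ) (t : ℤ → ℤ → ℤ → ℂ) (p : ℤ × ℤ × ℤ) : ℂ :=
  t p.1 p.2.1 p.2.2 * Complex.I ^ (3 * (j : ℤ) - |p.1| - |p.2.1| - |p.2.2|)

lemma eChar_mul (N : ℕ) (a : ℕ) (m m' : ℤ) :
    eChar N a m * eChar N a m' = eChar N a (m + m') := by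
  unfold eChar
  rw [← Complex.exp_add]
  congr 1
  push_cast
  ring

lemma eChar_sum (N : ℕ) (hN : 0 < N) (m : ℤ) :
    ∑ a : Fin N, eChar N (a : ℕ) m = if (N : ℤ) ∣ m then (N : ℂ) else 0 := by
  have hNz : (N:ℂ) ≠ 0 := Nat.cast_ne_zero.mpr hN.ne'
  have hpi : (2 * (Real.pi:ℂ) * Complex.I) ≠ 0 := Complex.two_pi_I_ne_zero
  unfold eChar
  set ζ : ℂ := Complex.exp (-(2 * (Real.pi:ℂ) * Complex.I / (N:ℂ)) * (m:ℂ)) with hζ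
  have h1 : ∀ a : Fin N, Complex.exp (-(2 * (Real.pi:ℂ) * Complex.I / (N:ℂ)) * ((a:ℕ) * (m:ℂ))) = ζ ^ (a:ℕ) := by
    intro a
    rw [hζ, ← Complex.exp_nat_mul]
    ring_nf
  simp only [h1]
  rw [Fin.sum_univ_eq_sum_range (fun i => ζ ^ i)]
  have hζN : ζ ^ N = 1 := by
    rw [hζ, ← Complex.exp_nat_mul]
    have : (N:ℂ) * (-(2 * (Real.pi:ℂ) * Complex.I / (N:ℂ)) * (m:ℂ)) = (-m : ℤ) * (2 * Real.pi * Complex.I) := by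
      push_cast; field_simp
    rw [this, Complex.exp_int_mul_two_pi_mul_I]
  by_cases hd : (N:ℤ) ∣ m
  · obtain ⟨k, hk⟩ := id hd
    have hz1 : ζ = 1 := by
      rw [hζ, hk]
      have : -(2 * (Real.pi:ℂ) * Complex.I / (N:ℂ)) * (((N:ℤ) * k : ℤ):ℂ) = (-k : ℤ) * (2 * Real.pi * Complex.I) := by
        push_cast; field_simp
      rw [this, Complex.exp_int_mul_two_pi_mul_I]
    rw [if_pos hd]
    simp [hz1]
  · have hζ1 : ζ ≠ 1 := by
      intro h
      rw [hζ, Complex.exp_eq_one_iff] at h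
      obtain ⟨n, hn⟩ := h
      apply hd
      refine ⟨-n, ?_⟩
      have h2 : (m:ℂ) = (N:ℂ) * ((-n : ℤ):ℂ) := by
        field_simp at hn
        push_cast
        apply mul_left_cancel₀ hpi
        linear_combination -(2 * (Real.pi:ℂ) * Complex.I) * hn
      exact_mod_cast h2
    rw [geom_sum_eq hζ1, hζN]
    simp [hd]

lemma swap5 {γ δ : Type*} [Fintype γ] (P : Finset δ)
    (X : γ → γ → γ → δ → δ → ℂ) :
    ∑ a : γ, ∑ b : γ, ∑ c : γ, ∑ p ∈ P, ∑ q ∈ P, X a b c p q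
      = ∑ p ∈ P, ∑ q ∈ P, ∑ a : γ, ∑ b : γ, ∑ c : γ, X a b c p q := by
  calc ∑ a : γ, ∑ b : γ, ∑ c : γ, ∑ p ∈ P, ∑ q ∈ P, X a b c p q
      = ∑ a : γ, ∑ b : γ, ∑ p ∈ P, ∑ c : γ, ∑ q ∈ P, X a b c p q :=
        Finset.sum_congr rfl fun a _ => Finset.sum_congr rfl fun b _ => Finset.sum_comm
    _ = ∑ a : γ, ∑ p ∈ P, ∑ b : γ, ∑ c : γ, ∑ q ∈ P, X a b c p q :=
        Finset.sum_congr rfl fun a _ => Finset.sum_comm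
    _ = ∑ p ∈ P, ∑ a : γ, ∑ b : γ, ∑ c : γ, ∑ q ∈ P, X a b c p q := Finset.sum_comm
    _ = ∑ p ∈ P, ∑ a : γ, ∑ b : γ, ∑ q ∈ P, ∑ c : γ, X a b c p q :=
        Finset.sum_congr rfl fun p _ => Finset.sum_congr rfl fun a _ =>
          Finset.sum_congr rfl fun b _ => Finset.sum_comm
    _ = ∑ p ∈ P, ∑ a : γ, ∑ q ∈ P, ∑ b : γ, ∑ c : γ, X a b c p q :=
        Finset.sum_congr rfl fun p _ => Finset.sum_congr rfl fun a _ => Finset.sum_comm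
    _ = ∑ p ∈ P, ∑ q ∈ P, ∑ a : γ, ∑ b : γ, ∑ c : γ, X a b c p q :=
        Finset.sum_congr rfl fun p _ => Finset.sum_comm

lemma prod_three_sums {γ δ : Type*} [Fintype γ] (p q : δ)
    (f g h : γ → δ → δ → ℂ) :
    (∑ a : γ, f a p q) * (∑ b : γ, g b p q) * (∑ c : γ, h c p q)
      = ∑ a : γ, ∑ b : γ, ∑ c : γ, f a p q * g b p q * h c p q := by
  rw [Finset.sum_mul_sum, Finset.sum_mul]
  refine Finset.sum_congr rfl fun a _ => ?_
  rw [Finset.sum_mul]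
  exact Finset.sum_congr rfl fun b _ => Finset.mul_sum _ _ _

lemma interchange {γ δ : Type*} [Fintype γ] (P : Finset δ)
    (F : δ → δ → ℂ) (f g h : γ → δ → δ → ℂ) :
    ∑ a : γ, ∑ b : γ, ∑ c : γ, ∑ p ∈ P, ∑ q ∈ P,
        F p q * (f a p q * g b p q * h c p q)
      = ∑ p ∈ P, ∑ q ∈ P, F p q *
          ((∑ a : γ, f a p q) * (∑ b : γ, g b p q) * (∑ c : γ, h c p q)) := by
  rw [swap5]
  refine Finset.sum_congr rfl fun p _ => Finset.sum_congr rfl fun q _ => ?_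
  rw [prod_three_sums, Finset.mul_sum]
  refine Finset.sum_congr rfl fun a _ => ?_
  rw [Finset.mul_sum]
  exact Finset.sum_congr rfl fun b _ => (Finset.mul_sum _ _ _).symm

/-- The quadratic invariant in direct space equals `N³` times the contraction of `t` with
itself through the invariant metric `g_{mm'} = (-1)^{j-m} δ_{m,-m'}`. -/
theorem quadratic_invariant_fourier (j N : ℕ) (hN : N = 2 * j + 1)
    (t : ℤ → ℤ → ℤ → ℂ)
    (φ : ℤ → ℤ → ℤ → ℂ) (hφ : φ = fourierPresentation j N t) :
    ∑ a : Fin N, ∑ b : Fin N, ∑ c : Fin N,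
        (φ ((a : ℕ) : ℤ) ((b : ℕ) : ℤ) ((c : ℕ) : ℤ)) ^ 2
      = (N : ℂ) ^ 3 *
          ∑ m1 ∈ Finset.Icc (-(j : ℤ)) (j : ℤ), ∑ m2 ∈ Finset.Icc (-(j : ℤ)) (j : ℤ),
            ∑ m3 ∈ Finset.Icc (-(j : ℤ)) (j : ℤ),
              (-1 : ℂ) ^ (3 * (j : ℤ) - |m1| - |m2| - |m3|) *
                (t m1 m2 m3 * t (-m1) (-m2) (-m3)) := by
  subst hφ
  have hNpos : 0 < N := by omega
  set M : Finset ℤ := Finset.Icc (-(j:ℤ)) (j:ℤ) with hM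
  set P : Finset (ℤ × ℤ × ℤ) := M ×ˢ M ×ˢ M with hP
  have dvd_iff : ∀ m ∈ M, ∀ m' ∈ M, ((N:ℤ) ∣ m + m' ↔ m' = -m) := by
    intro m hm m' hm'
    rw [hM, Finset.mem_Icc] at hm hm'
    constructor
    · intro h
      have h0 : m + m' = 0 := Int.eq_zero_of_abs_lt_dvd h (by rw [abs_lt]; omega)
      omega
    · intro h
      subst h
      simp
  have hφ' : ∀ a b c : Fin N,
      fourierPresentation j N t ((a:ℕ):ℤ) ((b:ℕ):ℤ) ((c:ℕ):ℤ)
        = ∑ p ∈ P, Faux j t p * (eChar N a p.1 * eChar N b p.2.1 * eChar N c p.2.2) := by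
    intro a b c
    rw [hP, Finset.sum_product]
    unfold fourierPresentation
    refine Finset.sum_congr rfl fun m1 _ => ?_
    rw [Finset.sum_product]
    refine Finset.sum_congr rfl fun m2 _ => Finset.sum_congr rfl fun m3 _ => ?_
    have hsplit : Complex.exp (-(2 * (Real.pi : ℂ) * Complex.I / (N : ℂ)) *
          (((((a:ℕ):ℤ)):ℂ) * (m1 : ℂ) + ((((b:ℕ):ℤ)):ℂ) * (m2 : ℂ) + ((((c:ℕ):ℤ)):ℂ) * (m3 : ℂ)))
        = eChar N a m1 * eChar N b m2 * eChar N c m3 := by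
      unfold eChar
      rw [← Complex.exp_add, ← Complex.exp_add]
      congr 1
      push_cast
      ring
    rw [hsplit]
    unfold Faux
    rfl
  calc ∑ a : Fin N, ∑ b : Fin N, ∑ c : Fin N,
        (fourierPresentation j N t ((a:ℕ):ℤ) ((b:ℕ):ℤ) ((c:ℕ):ℤ)) ^ 2
      = ∑ a : Fin N, ∑ b : Fin N, ∑ c : Fin N, ∑ p ∈ P, ∑ q ∈ P,
          (Faux j t p * Faux j t q) *
            (eChar N a (p.1 + q.1) * eChar N b (p.2.1 + q.2.1) * eChar N c (p.2.2 + q.2.2)) := by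
        refine Finset.sum_congr rfl fun a _ => Finset.sum_congr rfl fun b _ =>
          Finset.sum_congr rfl fun c _ => ?_
        rw [hφ' a b c, sq, Finset.sum_mul_sum]
        refine Finset.sum_congr rfl fun p _ => Finset.sum_congr rfl fun q _ => ?_
        rw [← eChar_mul, ← eChar_mul, ← eChar_mul]
        ring
    _ = ∑ p ∈ P, ∑ q ∈ P, (Faux j t p * Faux j t q) *
          ((∑ a : Fin N, eChar N a (p.1 + q.1)) * (∑ b : Fin N, eChar N b (p.2.1 + q.2.1)) *
            (∑ c : Fin N, eChar N c (p.2.2 + q.2.2))) :=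
        interchange P _ _ _ _
    _ = ∑ p ∈ P, Faux j t p * Faux j t (-p.1, -p.2.1, -p.2.2) * (N:ℂ)^3 := by
        refine Finset.sum_congr rfl fun p hp => ?_
        obtain ⟨hp1, hp2, hp3⟩ : p.1 ∈ M ∧ p.2.1 ∈ M ∧ p.2.2 ∈ M := by
          simpa [hP, Finset.mem_product] using hp
        have hnegmem : ((-p.1, -p.2.1, -p.2.2) : ℤ × ℤ × ℤ) ∈ P := by
          rw [hM, Finset.mem_Icc] at hp1 hp2 hp3
          simp only [hP, Finset.mem_product, hM, Finset.mem_Icc]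
          omega
        calc ∑ q ∈ P, (Faux j t p * Faux j t q) *
              ((∑ a : Fin N, eChar N a (p.1 + q.1)) * (∑ b : Fin N, eChar N b (p.2.1 + q.2.1)) *
                (∑ c : Fin N, eChar N c (p.2.2 + q.2.2)))
            = ∑ q ∈ P, if q = (-p.1, -p.2.1, -p.2.2) then Faux j t p * Faux j t q * (N:ℂ)^3 else 0 := by
              refine Finset.sum_congr rfl fun q hq => ?_
              obtain ⟨hq1, hq2, hq3⟩ : q.1 ∈ M ∧ q.2.1 ∈ M ∧ q.2.2 ∈ M := by
                simpa [hP, Finset.mem_product] using hq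
              rw [eChar_sum N hNpos, eChar_sum N hNpos, eChar_sum N hNpos]
              simp only [dvd_iff _ hp1 _ hq1, dvd_iff _ hp2 _ hq2, dvd_iff _ hp3 _ hq3]
              by_cases h1 : q.1 = -p.1 <;> by_cases h2 : q.2.1 = -p.2.1 <;>
                by_cases h3 : q.2.2 = -p.2.2 <;>
                first
                | (rw [if_pos h1, if_pos h2, if_pos h3,
                      if_pos (show q = (-p.1, -p.2.1, -p.2.2) by
                        obtain ⟨q1, q2, q3⟩ := q
                        simp_all)]
                   ring)
                | simp [Prod.ext_iff, h1, h2, h3]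
          _ = Faux j t p * Faux j t (-p.1, -p.2.1, -p.2.2) * (N:ℂ)^3 := by
              rw [Finset.sum_ite_eq' P _ (fun q => Faux j t p * Faux j t q * (N:ℂ)^3)]
              rw [if_pos hnegmem]
    _ = (N:ℂ)^3 * ∑ p ∈ P, (-1:ℂ) ^ (3*(j:ℤ) - |p.1| - |p.2.1| - |p.2.2|) *
          (t p.1 p.2.1 p.2.2 * t (-p.1) (-p.2.1) (-p.2.2)) := by
        rw [Finset.mul_sum]
        refine Finset.sum_congr rfl fun p hp => ?_
        unfold Faux
        dsimp only
        rw [abs_neg, abs_neg, abs_neg]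
        have hI : Complex.I ^ (3*(j:ℤ) - |p.1| - |p.2.1| - |p.2.2|) *
            Complex.I ^ (3*(j:ℤ) - |p.1| - |p.2.1| - |p.2.2|)
            = (-1:ℂ) ^ (3*(j:ℤ) - |p.1| - |p.2.1| - |p.2.2|) := by
          rw [← mul_zpow, Complex.I_mul_I]
        linear_combination ((N:ℂ)^3 * t p.1 p.2.1 p.2.2 * t (-p.1) (-p.2.1) (-p.2.2)) * hI
    _ = (N : ℂ) ^ 3 *
          ∑ m1 ∈ Finset.Icc (-(j : ℤ)) (j : ℤ), ∑ m2 ∈ Finset.Icc (-(j : ℤ)) (j : ℤ),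
            ∑ m3 ∈ Finset.Icc (-(j : ℤ)) (j : ℤ),
              (-1 : ℂ) ^ (3 * (j : ℤ) - |m1| - |m2| - |m3|) *
                (t m1 m2 m3 * t (-m1) (-m2) (-m3)) := by
        congr 1
        rw [hP, Finset.sum_product]
        exact Finset.sum_congr rfl fun m1 _ => Finset.sum_product _ _ _
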